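/- Let M be a complex matrix, let A=(a_1,...,a_s) and B=(b_1,...,b_s) be tuples of distinct row and column indices of equal length, let a, ā be two further distinct row indices not occurring in A, and b̂, b, b̄ three further distinct column indices not occurring in B. Then M^{aāA,bb̄B}·M^{aA,b̂B} − M^{aA,bB}·M^{aāA,b̂b̄B} + M^{aA,b̄B}·M^{aāA,b̂bB} = 0. -/

import Mathlib

/-- The minor `M^{A,B}` of a matrix `M` with rows selected by the tuple `A`
and columns selected by the tuple `B`; for `s = 0` this equals `1`. -/
noncomputable def minor {I J : Type*} (M : I → J → ℂ) {s : ℕ}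
    (A : Fin s → I) (B : Fin s → J) : ℂ :=
  Matrix.det (Matrix.of fun α β => M (A α) (B β))

open Matrix Submodule Set

namespace DegenerateAux

variable {s : ℕ}

lemma zero_ne_one' : (0 : Fin (s + 2)) ≠ 1 := by
  simp [Fin.ext_iff]

lemma one_eq_succ : (1 : Fin (s + 2)) = Fin.succ 0 := rfl

lemma cons_one {n : ℕ} {α : Type*} (x : α) (p : Fin (n + 1) → α) :
    (Fin.cons x p : Fin (n + 2) → α) 1 = p 0 := by
  rw [show (1 : Fin (n + 2)) = Fin.succ 0 from rfl, Fin.cons_succ]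

/-- determinant of the square matrix whose rows are `x`, `y`, followed by `C`. -/
noncomputable def D (C : Fin s → Fin (s + 2) → ℂ) (x y : Fin (s + 2) → ℂ) : ℂ :=
  Matrix.det (Matrix.of (Fin.cons x (Fin.cons y C)))

lemma D_swap (C : Fin s → Fin (s + 2) → ℂ) (x y : Fin (s + 2) → ℂ) :
    D C x y = - D C y x := by
  have h : (Fin.cons y (Fin.cons x C) : Fin (s + 2) → Fin (s + 2) → ℂ) ∘ Equiv.swap 0 1
      = Fin.cons x (Fin.cons y C) := by
    funext i
    refine Fin.cases ?_ (fun j => Fin.cases ?_ (fun k => ?_) j) i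
    · rw [Function.comp_apply, Equiv.swap_apply_left, cons_one, Fin.cons_zero, Fin.cons_zero]
    · rw [Function.comp_apply, ← one_eq_succ, Equiv.swap_apply_right, Fin.cons_zero, cons_one,
        Fin.cons_zero]
    · rw [Function.comp_apply, Equiv.swap_apply_of_ne_of_ne (Fin.succ_ne_zero _)
        (Fin.succ_succ_ne_one _), Fin.cons_succ, Fin.cons_succ, Fin.cons_succ, Fin.cons_succ]
  have := (Matrix.detRowAlternating :
      (Fin (s+2) → ℂ) [⋀^Fin (s+2)]→ₗ[ℂ] ℂ).map_swap
      (Fin.cons y (Fin.cons x C)) zero_ne_one'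
  rw [h] at this
  exact this

lemma D_diag (C : Fin s → Fin (s + 2) → ℂ) (x : Fin (s + 2) → ℂ) : D C x x = 0 :=
  Matrix.det_zero_of_row_eq zero_ne_one'
    (show (Fin.cons x (Fin.cons x C) : Fin (s+2) → Fin (s+2) → ℂ) 0
        = (Fin.cons x (Fin.cons x C) : Fin (s+2) → Fin (s+2) → ℂ) 1 by
      rw [Fin.cons_zero, cons_one, Fin.cons_zero])

lemma D_left_mem (C : Fin s → Fin (s + 2) → ℂ) (i : Fin s) (y : Fin (s + 2) → ℂ) :
    D C (C i) y = 0 :=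
  Matrix.det_zero_of_row_eq (i := 0) (j := i.succ.succ)
    (Ne.symm (Fin.succ_ne_zero _))
    (show (Fin.cons (C i) (Fin.cons y C) : Fin (s+2) → Fin (s+2) → ℂ) 0
        = (Fin.cons (C i) (Fin.cons y C) : Fin (s+2) → Fin (s+2) → ℂ) i.succ.succ by
      rw [Fin.cons_zero, Fin.cons_succ, Fin.cons_succ])

lemma D_right_mem (C : Fin s → Fin (s + 2) → ℂ) (i : Fin s) (x : Fin (s + 2) → ℂ) :
    D C x (C i) = 0 :=
  Matrix.det_zero_of_row_eq (i := 1) (j := i.succ.succ)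
    (Ne.symm (Fin.succ_succ_ne_one _))
    (show (Fin.cons x (Fin.cons (C i) C) : Fin (s+2) → Fin (s+2) → ℂ) 1
        = (Fin.cons x (Fin.cons (C i) C) : Fin (s+2) → Fin (s+2) → ℂ) i.succ.succ by
      rw [cons_one, Fin.cons_zero, Fin.cons_succ, Fin.cons_succ])

lemma row_update₁ (C : Fin s → Fin (s + 2) → ℂ) (x y z : Fin (s + 2) → ℂ) :
    Matrix.of (Fin.cons z (Fin.cons y C))
      = Matrix.updateRow (Matrix.of (Fin.cons x (Fin.cons y C))) 0 z := by
  show Matrix.of (Fin.cons z (Fin.cons y C))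
      = Matrix.of (Function.update (Fin.cons x (Fin.cons y C)) 0 z)
  rw [Fin.update_cons_zero]

lemma row_update₂ (C : Fin s → Fin (s + 2) → ℂ) (x y z : Fin (s + 2) → ℂ) :
    Matrix.of (Fin.cons x (Fin.cons z C))
      = Matrix.updateRow (Matrix.of (Fin.cons x (Fin.cons y C))) 1 z := by
  show Matrix.of (Fin.cons x (Fin.cons z C))
      = Matrix.of (Function.update (Fin.cons x (Fin.cons y C)) 1 z)
  rw [one_eq_succ, ← Fin.cons_update, Fin.update_cons_zero]

lemma D_add₁ (C : Fin s → Fin (s + 2) → ℂ) (x x' y : Fin (s + 2) → ℂ) :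
    D C (x + x') y = D C x y + D C x' y := by
  unfold D
  rw [row_update₁ C x y (x + x'), row_update₁ C x y x', Matrix.det_updateRow_add,
    ← row_update₁ C x y x]

lemma D_smul₁ (C : Fin s → Fin (s + 2) → ℂ) (c : ℂ) (x y : Fin (s + 2) → ℂ) :
    D C (c • x) y = c * D C x y := by
  unfold D
  rw [row_update₁ C x y (c • x), Matrix.det_updateRow_smul, ← row_update₁ C x y x]

lemma D_add₂ (C : Fin s → Fin (s + 2) → ℂ) (x y y' : Fin (s + 2) → ℂ) :
    D C x (y + y') = D C x y + D C x y' := by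
  unfold D
  rw [row_update₂ C x y (y + y'), row_update₂ C x y y', Matrix.det_updateRow_add,
    ← row_update₂ C x y y]

lemma D_smul₂ (C : Fin s → Fin (s + 2) → ℂ) (c : ℂ) (x y : Fin (s + 2) → ℂ) :
    D C x (c • y) = c * D C x y := by
  unfold D
  rw [row_update₂ C x y (c • y), Matrix.det_updateRow_smul, ← row_update₂ C x y y]

lemma span_top_of_det_ne_zero (N : Matrix (Fin (s+2)) (Fin (s+2)) ℂ)
    (h : N.det ≠ 0) : span ℂ (Set.range (N : Fin (s+2) → Fin (s+2) → ℂ)) = ⊤ := by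
  rw [show Set.range (N : Fin (s+2) → Fin (s+2) → ℂ) = Set.range N.row from rfl,
    ← range_vecMulLinear, LinearMap.range_eq_top]
  intro yv
  exact (Matrix.vecMul_surjective_iff_isUnit.2
    (N.isUnit_iff_isUnit_det.2 (isUnit_iff_ne_zero.2 h))) yv

lemma D_eq_zero_of_mem_span (C : Fin s → Fin (s + 2) → ℂ) (x y : Fin (s + 2) → ℂ)
    (p : Submodule ℂ (Fin (s+2) → ℂ)) (hp : p ≠ ⊤)
    (hx : x ∈ p) (hy : y ∈ p) (hC : ∀ i, C i ∈ p) :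
    D C x y = 0 := by
  by_contra h
  apply hp
  rw [eq_top_iff, ← span_top_of_det_ne_zero _ h, Submodule.span_le]
  rintro _ ⟨i, rfl⟩
  show (Fin.cons x (Fin.cons y C) : Fin (s+2) → Fin (s+2) → ℂ) i ∈ p
  refine Fin.cases ?_ (fun j => Fin.cases ?_ (fun k => ?_) j) i
  · rwa [Fin.cons_zero]
  · rwa [Fin.cons_succ, Fin.cons_zero]
  · rw [Fin.cons_succ, Fin.cons_succ]; exact hC k

lemma D_zero₁ (C : Fin s → Fin (s + 2) → ℂ) (y : Fin (s + 2) → ℂ) : D C 0 y = 0 := by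
  simpa using D_smul₁ C 0 0 y

lemma D_zero₂ (C : Fin s → Fin (s + 2) → ℂ) (x : Fin (s + 2) → ℂ) : D C x 0 = 0 := by
  simpa using D_smul₂ C 0 x 0

/-- The three-term Pluecker relation. -/
lemma pluecker (C : Fin s → Fin (s + 2) → ℂ) (v w e u : Fin (s + 2) → ℂ) :
    D C v w * D C u e - D C v u * D C w e + D C v e * D C w u = 0 := by
  classical
  by_cases htop : span ℂ (({v, w, e} : Set (Fin (s+2) → ℂ)) ∪ Set.range C) = ⊤
  · have hu : u ∈ span ℂ (({v, w, e} : Set (Fin (s+2) → ℂ)) ∪ Set.range C) := by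
      rw [htop]; exact mem_top
    refine Submodule.span_induction
      (p := fun z _ => D C v w * D C z e - D C v z * D C w e + D C v e * D C w z = 0)
      ?_ ?_ ?_ ?_ hu
    · rintro z (hz | ⟨i, rfl⟩)
      all_goals show D C v w * D C _ e - D C v _ * D C w e + D C v e * D C w _ = 0
      · rcases hz with rfl | rfl | rfl
        · rw [D_diag, D_swap C w z]; ring
        · rw [D_diag, D_swap C v z]; ring
        · rw [D_diag]; ring
      · rw [D_left_mem, D_right_mem, D_right_mem]; ring
    · show D C v w * D C 0 e - D C v 0 * D C w e + D C v e * D C w 0 = 0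
      rw [D_zero₁, D_zero₂, D_zero₂]; ring
    · intro x y _ _ hx hy
      show D C v w * D C (x + y) e - D C v (x + y) * D C w e + D C v e * D C w (x + y) = 0
      rw [D_add₁, D_add₂, D_add₂]
      linear_combination hx + hy
    · intro c x _ hx
      show D C v w * D C (c • x) e - D C v (c • x) * D C w e + D C v e * D C w (c • x) = 0
      rw [D_smul₁, D_smul₂, D_smul₂]
      linear_combination c * hx
  · have hmem : ∀ z ∈ ({v, w, e} : Set (Fin (s+2) → ℂ)),
        z ∈ span ℂ (({v, w, e} : Set (Fin (s+2) → ℂ)) ∪ Set.range C) :=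
      fun z hz => subset_span (Or.inl hz)
    have hC : ∀ i, C i ∈ span ℂ (({v, w, e} : Set (Fin (s+2) → ℂ)) ∪ Set.range C) :=
      fun i => subset_span (Or.inr ⟨i, rfl⟩)
    have h1 : D C v w = 0 := D_eq_zero_of_mem_span C v w _ htop
      (hmem v (by simp)) (hmem w (by simp)) hC
    have h2 : D C w e = 0 := D_eq_zero_of_mem_span C w e _ htop
      (hmem w (by simp)) (hmem e (by simp)) hC
    have h3 : D C v e = 0 := D_eq_zero_of_mem_span C v e _ htop
      (hmem v (by simp)) (hmem e (by simp)) hC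
    rw [h1, h2, h3]; ring


lemma succAbove_one_zero : (1 : Fin (s + 2)).succAbove 0 = 0 := by
  rw [Fin.succAbove_of_castSucc_lt _ _ (by rw [Fin.lt_def]; simp)]
  rfl
lemma succAbove_one_succ (k : Fin s) :
    (1 : Fin (s + 2)).succAbove k.succ = k.succ.succ := by
  rw [Fin.succAbove_of_le_castSucc _ _ (by rw [Fin.le_def]; simp)]

end DegenerateAux

open DegenerateAux

/-- The degenerate Jacobi-type identity
`M^{aāA,bb̄B}·M^{aA,b̂B} − M^{aA,bB}·M^{aāA,b̂b̄B} + M^{aA,b̄B}·M^{aāA,b̂bB} = 0`. -/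
theorem degenerate_minor_identity {I J : Type*} (M : I → J → ℂ) {s : ℕ}
    (A : Fin s → I) (B : Fin s → J)
    (hA : Function.Injective A) (hB : Function.Injective B)
    (a abar : I) (bhat b bbar : J)
    (hr : a ≠ abar) (hrA1 : ∀ α, a ≠ A α) (hrA2 : ∀ α, abar ≠ A α)
    (hc1 : bhat ≠ b) (hc2 : bhat ≠ bbar) (hc3 : b ≠ bbar)
    (hcB1 : ∀ β, bhat ≠ B β) (hcB2 : ∀ β, b ≠ B β) (hcB3 : ∀ β, bbar ≠ B β) :
    minor M (Fin.cons a (Fin.cons abar A)) (Fin.cons b (Fin.cons bbar B)) *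
        minor M (Fin.cons a A) (Fin.cons bhat B)
      - minor M (Fin.cons a A) (Fin.cons b B) *
          minor M (Fin.cons a (Fin.cons abar A)) (Fin.cons bhat (Fin.cons bbar B))
      + minor M (Fin.cons a A) (Fin.cons bbar B) *
          minor M (Fin.cons a (Fin.cons abar A)) (Fin.cons bhat (Fin.cons b B))
      = 0 := by

  classical
  set r : Fin (s + 2) → I := Fin.cons a (Fin.cons abar A) with hrdef
  set vec : J → (Fin (s + 2) → ℂ) := fun j i => M (r i) j with hvecdef
  set C : Fin s → Fin (s + 2) → ℂ := fun β => vec (B β) with hCdef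
  set e : Fin (s + 2) → ℂ := Pi.single (1 : Fin (s + 2)) 1 with hedef
  -- big minors
  have big : ∀ x y : J,
      minor M r (Fin.cons x (Fin.cons y B)) = D C (vec x) (vec y) := by
    intro x y
    unfold minor D
    conv_lhs => rw [← Matrix.det_transpose]
    congr 1
    ext α β
    rw [Matrix.transpose_apply, Matrix.of_apply, Matrix.of_apply]
    refine Fin.cases ?_ (fun j => Fin.cases ?_ (fun k => ?_) j) α
    · rw [Fin.cons_zero, Fin.cons_zero]
    · rw [Fin.cons_succ, Fin.cons_zero, Fin.cons_succ, Fin.cons_zero]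
    · rw [Fin.cons_succ, Fin.cons_succ, Fin.cons_succ, Fin.cons_succ]
  -- small minors
  have small : ∀ x : J,
      minor M (Fin.cons a A) (Fin.cons x B) = D C (vec x) e := by
    intro x
    set N : Matrix (Fin (s + 2)) (Fin (s + 2)) ℂ :=
      Matrix.of (Fin.cons (vec x) (Fin.cons e C)) with hNdef
    have hrow : N 1 = e := by
      show (Fin.cons (vec x) (Fin.cons e C) : Fin (s + 2) → Fin (s + 2) → ℂ) 1 = e
      rw [cons_one, Fin.cons_zero]
    have hdet : D C (vec x) e = ∑ j : Fin (s + 2),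
        (-1 : ℂ) ^ ((1 : Fin (s + 2)) + j : ℕ) * N 1 j *
          (N.submatrix (Fin.succAbove 1) (Fin.succAbove j)).det :=
      Matrix.det_succ_row N 1
    have hsum : D C (vec x) e =
        (N.submatrix (Fin.succAbove 1) (Fin.succAbove 1)).det := by
      rw [hdet, Finset.sum_eq_single_of_mem (1 : Fin (s + 2)) (Finset.mem_univ _)]
      · rw [hrow, hedef, Pi.single_eq_same, Fin.val_one]
        norm_num
      · intro j _ hj
        rw [hrow, hedef, Pi.single_eq_of_ne hj]
        ring
    have hsub : N.submatrix (Fin.succAbove 1) (Fin.succAbove 1)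
        = (Matrix.of fun α β => M ((Fin.cons a A : Fin (s+1) → I) α) ((Fin.cons x B : Fin (s+1) → J) β))ᵀ := by
      ext j i
      rw [Matrix.submatrix_apply, Matrix.transpose_apply, Matrix.of_apply]
      have hN : ∀ p q, N p q
          = (Fin.cons (vec x) (Fin.cons e C) : Fin (s+2) → Fin (s+2) → ℂ) p q :=
        fun _ _ => rfl
      refine Fin.cases ?_ (fun k => ?_) j <;> refine Fin.cases ?_ (fun l => ?_) i <;>
        simp [hN, succAbove_one_zero, succAbove_one_succ, hvecdef, hCdef, hrdef]
    rw [hsum, hsub, Matrix.det_transpose]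
    rfl
  have hp := pluecker C (vec b) (vec bbar) e (vec bhat)
  rw [D_swap C (vec b) (vec bhat), D_swap C (vec bbar) (vec bhat)] at hp
  rw [big b bbar, big bhat bbar, big bhat b, small bhat, small b, small bbar]
  linear_combination hp
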